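/- arXiv:1103.2501 — 6 statements merged into one kernel-verified Lean document; each statement's English description precedes it below -/
import Mathlib

section
/- Let P1, P2 ≥ 0 and h1, h2 ∈ ℝ satisfy the individually very strong interference conditions h1^2 ≥ 1 + P1 + P2 and h2^2 ≥ 1 + P1 + P2. Then the Gaussian MAC region 𝒞(P1, P2; 1) is contained in the Gaussian MAC region 𝒞(h1^2·P1, h2^2·P2; 1 + P1 + P2); that is, every pair (R1, R2) with R1, R2 ≥ 0, R1 ≤ (1/2)·log(1 + P1), R2 ≤ (1/2)·log(1 + P2), and R1 + R2 ≤ (1/2)·log(1 + P1 + P2) also satisfies R1 ≤ (1/2)·log(1 + h1^2·P1/(1 + P1 + P2)), R2 ≤ (1/2)·log(1 + h2^2·P2/(1 + P1 + P2)), and R1 + R2 ≤ (1/2)·log(1 + (h1^2·P1 + h2^2·P2)/(1 + P1 + P2)). -/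
/-- The Gaussian MAC region for effective received powers `q` and noise power `N`:
all nonnegative rate tuples such that for every nonempty subset `T` of users,
`∑ i in T, R i ≤ (1/2) * log (1 + (∑ i in T, q i) / N)`. -/
def macRegion {ι : Type*} [Fintype ι] (q : ι → ℝ) (N : ℝ) : Set (ι → ℝ) :=
  {R | (∀ i, 0 ≤ R i) ∧
    ∀ T : Finset ι, T.Nonempty →
      ∑ i ∈ T, R i ≤ (1 / 2) * Real.log (1 + (∑ i ∈ T, q i) / N)}

/-- under individually very strong interference,
`𝒞(P1, P2; 1) ⊆ 𝒞(h1²P1, h2²P2; 1 + P1 + P2)`. -/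
theorem stmt_0 (P1 P2 h1 h2 : ℝ) (hP1 : 0 ≤ P1) (hP2 : 0 ≤ P2)
    (hh1 : 1 + P1 + P2 ≤ h1 ^ 2) (hh2 : 1 + P1 + P2 ≤ h2 ^ 2) :
    macRegion ![P1, P2] 1 ⊆ macRegion ![h1 ^ 2 * P1, h2 ^ 2 * P2] (1 + P1 + P2) := by
  intro R hR
  refine ⟨hR.1, fun T hT => (hR.2 T hT).trans ?_⟩
  have hN : (0:ℝ) < 1 + P1 + P2 := by linarith
  have hS0 : 0 ≤ ∑ i ∈ T, ![P1, P2] i := by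
    refine Finset.sum_nonneg fun i _ => ?_
    fin_cases i <;> simpa
  have key : ∀ i ∈ T, (1 + P1 + P2) * (![P1, P2] i) ≤ ![h1 ^ 2 * P1, h2 ^ 2 * P2] i := by
    intro i _
    fin_cases i <;> simp <;> nlinarith
  have hsum : (1 + P1 + P2) * ∑ i ∈ T, ![P1, P2] i
      ≤ ∑ i ∈ T, ![h1 ^ 2 * P1, h2 ^ 2 * P2] i := by
    rw [Finset.mul_sum]; exact Finset.sum_le_sum key
  have harg : 1 + (∑ i ∈ T, ![P1, P2] i) / 1 ≤
      1 + (∑ i ∈ T, ![h1 ^ 2 * P1, h2 ^ 2 * P2] i) / (1 + P1 + P2) := by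
    rw [div_one]
    have : (∑ i ∈ T, ![P1, P2] i) ≤
        (∑ i ∈ T, ![h1 ^ 2 * P1, h2 ^ 2 * P2] i) / (1 + P1 + P2) := by
      rw [le_div_iff₀ hN]; linarith [hsum]
    linarith
  have hpos : 0 < 1 + (∑ i ∈ T, ![P1, P2] i) / 1 := by rw [div_one]; linarith
  have := Real.log_le_log hpos harg
  linarith
end

section
/- Let P1, P2 ≥ 0 and h1, h2 ∈ ℝ satisfy h1^2 ≥ 1 + P1 + P2 and h2^2 ≥ 1 + P1 + P2. Consider the outer-bound region 𝒪 ⊆ ℝ^4 consisting of all (R1, R2, R3, R4) with Ri ≥ 0 such that (R1, R2) ∈ 𝒞(P1, P2; 1), (R3, R4) ∈ 𝒞(P1, P2; 1), (R1, R2, R3) ∈ 𝒞(P1, P2, h1^2·P1; 1), (R1, R2, R4) ∈ 𝒞(P1, P2, h2^2·P2; 1), (R1, R3, R4) ∈ 𝒞(h1^2·P1, P1, P2; 1), and (R2, R3, R4) ∈ 𝒞(h2^2·P2, P1, P2; 1). Then 𝒪 equals the product region {(R1, R2, R3, R4) ∈ ℝ^4 : Ri ≥ 0, (R1, R2) ∈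 𝒞(P1, P2; 1), (R3, R4) ∈ 𝒞(P1, P2; 1)}; i.e., under individually very strong interference all six-user cross constraints are implied by the two interference-free pairwise MAC constraints. -/
private lemma comb {x y a b c : ℝ} (ha : 0 ≤ a) (hb : 0 ≤ b)
    (hx : x ≤ 1 / 2 * Real.log (1 + a)) (hy : y ≤ 1 / 2 * Real.log (1 + b))
    (h : (1 + a) * (1 + b) ≤ 1 + c) : x + y ≤ 1 / 2 * Real.log (1 + c) := by
  have h1 : (0:ℝ) < 1 + a := by linarith
  have h2 : (0:ℝ) < 1 + b := by linarith
  have hl := Real.log_le_log (by positivity) h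
  rw [Real.log_mul h1.ne' h2.ne'] at hl
  linarith

private lemma mono' {x a b : ℝ} (ha : 0 ≤ a)
    (hx : x ≤ 1 / 2 * Real.log (1 + a)) (h : a ≤ b) :
    x ≤ 1 / 2 * Real.log (1 + b) := by
  have hl := Real.log_le_log (by linarith) (show (1:ℝ) + a ≤ 1 + b by linarith)
  linarith

set_option maxHeartbeats 3200000 in
/-- under individually very strong interference, the outer-bound region
equals the product of the two interference-free MAC regions. -/
theorem stmt_1 (P1 P2 h1 h2 : ℝ) (hP1 : 0 ≤ P1) (hP2 : 0 ≤ P2)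
    (hh1 : 1 + P1 + P2 ≤ h1 ^ 2) (hh2 : 1 + P1 + P2 ≤ h2 ^ 2) :
    {R : Fin 4 → ℝ | (∀ i, 0 ≤ R i) ∧
      ![R 0, R 1] ∈ macRegion ![P1, P2] 1 ∧
      ![R 2, R 3] ∈ macRegion ![P1, P2] 1 ∧
      ![R 0, R 1, R 2] ∈ macRegion ![P1, P2, h1 ^ 2 * P1] 1 ∧
      ![R 0, R 1, R 3] ∈ macRegion ![P1, P2, h2 ^ 2 * P2] 1 ∧
      ![R 0, R 2, R 3] ∈ macRegion ![h1 ^ 2 * P1, P1, P2] 1 ∧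
      ![R 1, R 2, R 3] ∈ macRegion ![h2 ^ 2 * P2, P1, P2] 1} =
    {R : Fin 4 → ℝ | (∀ i, 0 ≤ R i) ∧
      ![R 0, R 1] ∈ macRegion ![P1, P2] 1 ∧
      ![R 2, R 3] ∈ macRegion ![P1, P2] 1} := by
  have hh1' : (1:ℝ) ≤ h1 ^ 2 := by linarith
  have hh2' : (1:ℝ) ≤ h2 ^ 2 := by linarith
  ext R
  simp only [Set.mem_setOf_eq]
  constructor
  · rintro ⟨h0, h12, h34, -, -, -, -⟩; exact ⟨h0, h12, h34⟩
  · rintro ⟨h0, h12, h34⟩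
    have A0 : R 0 ≤ 1 / 2 * Real.log (1 + P1) := by
      have := h12.2 {0} ⟨0, by simp⟩; simpa using this
    have A1 : R 1 ≤ 1 / 2 * Real.log (1 + P2) := by
      have := h12.2 {1} ⟨1, by simp⟩; simpa using this
    have A01 : R 0 + R 1 ≤ 1 / 2 * Real.log (1 + (P1 + P2)) := by
      have := h12.2 {0, 1} ⟨0, by simp⟩; simpa using this
    have B2 : R 2 ≤ 1 / 2 * Real.log (1 + P1) := by
      have := h34.2 {0} ⟨0, by simp⟩; simpa using this
    have B3 : R 3 ≤ 1 / 2 * Real.log (1 + P2) := by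
      have := h34.2 {1} ⟨1, by simp⟩; simpa using this
    have B23 : R 2 + R 3 ≤ 1 / 2 * Real.log (1 + (P1 + P2)) := by
      have := h34.2 {0, 1} ⟨0, by simp⟩; simpa using this
    have hP12 : (0:ℝ) ≤ P1 + P2 := by linarith
    refine ⟨h0, h12, h34, ⟨?_, ?_⟩, ⟨?_, ?_⟩, ⟨?_, ?_⟩, ⟨?_, ?_⟩⟩
    · intro i; fin_cases i <;> simp <;> apply h0
    · intro T hT
      fin_cases T
      · exact absurd hT (by simp)
      all_goals (simp only [Finset.sum_insert, Finset.mem_insert, Finset.mem_singleton,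
        Finset.sum_singleton, Matrix.cons_val_zero, Matrix.cons_val_one, Matrix.head_cons,
        Matrix.cons_val_two, Matrix.tail_cons, div_one]; norm_num)
      · exact A0
      · exact A1
      · exact A01
      · exact mono' hP1 B2 (by nlinarith)
      · exact comb hP1 hP1 A0 B2 (by nlinarith)
      · exact comb hP2 hP1 A1 B2 (by nlinarith)
      · have := comb hP12 hP1 A01 B2
          (show (1+(P1+P2))*(1+P1) ≤ 1+(P1+(P2+h1^2*P1)) by nlinarith)
        linarith
    · intro i; fin_cases i <;> simp <;> apply h0
    · intro T hT
      fin_cases T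
      · exact absurd hT (by simp)
      all_goals (simp only [Finset.sum_insert, Finset.mem_insert, Finset.mem_singleton,
        Finset.sum_singleton, Matrix.cons_val_zero, Matrix.cons_val_one, Matrix.head_cons,
        Matrix.cons_val_two, Matrix.tail_cons, div_one]; norm_num)
      · exact A0
      · exact A1
      · exact A01
      · exact mono' hP2 B3 (by nlinarith)
      · exact comb hP1 hP2 A0 B3 (by nlinarith)
      · exact comb hP2 hP2 A1 B3 (by nlinarith)
      · have := comb hP12 hP2 A01 B3
          (show (1+(P1+P2))*(1+P2) ≤ 1+(P1+(P2+h2^2*P2)) by nlinarith)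
        linarith
    · intro i; fin_cases i <;> simp <;> apply h0
    · intro T hT
      fin_cases T
      · exact absurd hT (by simp)
      all_goals (simp only [Finset.sum_insert, Finset.mem_insert, Finset.mem_singleton,
        Finset.sum_singleton, Matrix.cons_val_zero, Matrix.cons_val_one, Matrix.head_cons,
        Matrix.cons_val_two, Matrix.tail_cons, div_one]; norm_num)
      · exact mono' hP1 A0 (by nlinarith)
      · exact B2
      · exact comb hP1 hP1 A0 B2 (by nlinarith)
      · exact B3
      · exact comb hP1 hP2 A0 B3 (by nlinarith)
      · exact B23
      · have := comb hP1 hP12 A0 B23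
          (show (1+P1)*(1+(P1+P2)) ≤ 1+(h1^2*P1+(P1+P2)) by nlinarith)
        linarith
    · intro i; fin_cases i <;> simp <;> apply h0
    · intro T hT
      fin_cases T
      · exact absurd hT (by simp)
      all_goals (simp only [Finset.sum_insert, Finset.mem_insert, Finset.mem_singleton,
        Finset.sum_singleton, Matrix.cons_val_zero, Matrix.cons_val_one, Matrix.head_cons,
        Matrix.cons_val_two, Matrix.tail_cons, div_one]; norm_num)
      · exact mono' hP2 A1 (by nlinarith)
      · exact B2
      · exact comb hP2 hP1 A1 B2 (by nlinarith)
      · exact B3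
      · exact comb hP2 hP2 A1 B3 (by nlinarith)
      · exact B23
      · have := comb hP2 hP12 A1 B23
          (show (1+P2)*(1+(P1+P2)) ≤ 1+(h2^2*P2+(P1+P2)) by nlinarith)
        linarith
end

section
/- Let P1, P2 ≥ 0 and h1, h2 ∈ ℝ satisfy h1^2 ≥ 1 + P1 + P2 and h2^2 ≥ 1 + P1 + P2. Define the achievable region 𝒰 ⊆ ℝ^4 as the set of (R1, R2, R3, R4) with Ri ≥ 0 such that (R1, R2) ∈ 𝒞(P1, P2; 1) ∩ 𝒞(h1^2·P1, h2^2·P2; 1 + P1 + P2) and (R3, R4) ∈ 𝒞(P1, P2; 1) ∩ 𝒞(h1^2·P1, h2^2·P2; 1 + P1 + P2). Then the supremum of R1 + R2 + R3 + R4 over 𝒰 equals log(1 + P1 + P2), and this value is attained by some point of 𝒰. -/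
/-- under individually very strong interference, the maximal sum rate over
the achievable region `𝒰` equals `log (1 + P1 + P2)`, and it is attained. -/
theorem stmt_2 (P1 P2 h1 h2 : ℝ) (hP1 : 0 ≤ P1) (hP2 : 0 ≤ P2)
    (hh1 : 1 + P1 + P2 ≤ h1 ^ 2) (hh2 : 1 + P1 + P2 ≤ h2 ^ 2) :
    IsGreatest {s : ℝ | ∃ R : Fin 4 → ℝ, (∀ i, 0 ≤ R i) ∧
      ![R 0, R 1] ∈ macRegion ![P1, P2] 1 ∧
      ![R 0, R 1] ∈ macRegion ![h1 ^ 2 * P1, h2 ^ 2 * P2] (1 + P1 + P2) ∧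
      ![R 2, R 3] ∈ macRegion ![P1, P2] 1 ∧
      ![R 2, R 3] ∈ macRegion ![h1 ^ 2 * P1, h2 ^ 2 * P2] (1 + P1 + P2) ∧
      s = R 0 + R 1 + R 2 + R 3}
      (Real.log (1 + P1 + P2)) := by
  have hs0 : (0:ℝ) < 1 + P1 + P2 := by linarith
  have ha0 : (0:ℝ) < 1 + P1 := by linarith
  set a : ℝ := (1/2) * Real.log (1 + P1) with hadef
  set b : ℝ := (1/2) * Real.log ((1 + P1 + P2) / (1 + P1)) with hbdef
  have ha : 0 ≤ a := by
    have := Real.log_nonneg (by linarith : (1:ℝ) ≤ 1 + P1)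
    rw [hadef]; linarith
  have hb : 0 ≤ b := by
    have h : (1:ℝ) ≤ (1 + P1 + P2) / (1 + P1) := by
      rw [le_div_iff₀ ha0]; linarith
    have := Real.log_nonneg h
    rw [hbdef]; linarith
  have hab : a + b = (1/2) * Real.log (1 + P1 + P2) := by
    rw [hadef, hbdef, Real.log_div (by linarith) (by linarith)]; ring
  have hbP2 : b ≤ (1/2) * Real.log (1 + P2) := by
    rw [hbdef]
    have h : (1 + P1 + P2) / (1 + P1) ≤ 1 + P2 := by
      rw [div_le_iff₀ ha0]; nlinarith
    have := Real.log_le_log (by positivity) h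
    linarith
  have haP1h : a ≤ (1/2) * Real.log (1 + h1 ^ 2 * P1 / (1 + P1 + P2)) := by
    rw [hadef]
    have h : 1 + P1 ≤ 1 + h1 ^ 2 * P1 / (1 + P1 + P2) := by
      rw [add_le_add_iff_left, le_div_iff₀ hs0]; nlinarith
    have := Real.log_le_log ha0 h
    linarith
  have hbP2h : b ≤ (1/2) * Real.log (1 + h2 ^ 2 * P2 / (1 + P1 + P2)) := by
    have h : 1 + P2 ≤ 1 + h2 ^ 2 * P2 / (1 + P1 + P2) := by
      rw [add_le_add_iff_left, le_div_iff₀ hs0]; nlinarith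
    have := Real.log_le_log (by linarith : (0:ℝ) < 1 + P2) h
    linarith
  have hsumh : a + b ≤
      (1/2) * Real.log (1 + (h1 ^ 2 * P1 + h2 ^ 2 * P2) / (1 + P1 + P2)) := by
    rw [hab]
    have key : (P1 + P2) * (1 + P1 + P2) ≤ h1 ^ 2 * P1 + h2 ^ 2 * P2 := by
      nlinarith [mul_le_mul_of_nonneg_right hh1 hP1, mul_le_mul_of_nonneg_right hh2 hP2]
    have h : 1 + P1 + P2 ≤ 1 + (h1 ^ 2 * P1 + h2 ^ 2 * P2) / (1 + P1 + P2) := by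
      have := (le_div_iff₀ hs0).mpr key
      linarith
    have := Real.log_le_log hs0 h
    linarith
  have habP : a + b ≤ (1/2) * Real.log (1 + P1 + P2) := le_of_eq hab
  -- membership of the pair (a, b) in both MAC regions
  have hmem1 : (![a, b] : Fin 2 → ℝ) ∈ macRegion ![P1, P2] 1 := by
    refine ⟨by intro i; fin_cases i <;> simpa, ?_⟩
    intro T hT
    fin_cases T
    · exact absurd hT (by simp)
    · simpa using (by rw [hadef]; simp : a ≤ (1/2) * Real.log (1 + P1 / 1))
    · simpa using (by simpa using hbP2 : b ≤ (1/2) * Real.log (1 + P2 / 1))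
    · show ![a, b] 0 + (![a, b] 1 + 0) ≤
        (1/2) * Real.log (1 + (![P1, P2] 0 + (![P1, P2] 1 + 0)) / 1)
      simp only [Matrix.cons_val_zero, Matrix.cons_val_one, Matrix.head_cons,
        add_zero, div_one]
      rw [show (1:ℝ) + (P1 + P2) = 1 + P1 + P2 by ring]
      exact habP
  have hmem2 : (![a, b] : Fin 2 → ℝ) ∈
      macRegion ![h1 ^ 2 * P1, h2 ^ 2 * P2] (1 + P1 + P2) := by
    refine ⟨by intro i; fin_cases i <;> simpa, ?_⟩
    intro T hT
    fin_cases T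
    · exact absurd hT (by simp)
    · simpa using haP1h
    · simpa using hbP2h
    · simpa using hsumh
  constructor
  · refine ⟨![a, b, a, b], ?_, ?_, ?_, ?_, ?_, ?_⟩
    · intro i; fin_cases i <;> simpa
    · simpa using hmem1
    · simpa using hmem2
    · simpa using hmem1
    · simpa using hmem2
    · show Real.log (1 + P1 + P2) = a + b + a + b
      linarith
  · rintro x ⟨R, hR, hm1, -, hm3, -, rfl⟩
    have k1 := hm1.2 Finset.univ Finset.univ_nonempty
    have k3 := hm3.2 Finset.univ Finset.univ_nonempty
    simp only [Fin.sum_univ_two, Matrix.cons_val_zero, Matrix.cons_val_one,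
      Matrix.head_cons] at k1 k3
    have he : (1:ℝ) + (P1 + P2) / 1 = 1 + P1 + P2 := by ring
    rw [he] at k1 k3
    linarith
end

section
/- Let P1, P2 ≥ 0 and h1, h2 ∈ ℝ satisfy the mixed strong–extremely strong interference conditions h1^2 ≥ 1 and h2^2 ≥ 1 + P1 + P2 + h1^2·P1. Consider the outer-bound region 𝒪 ⊆ ℝ^4 consisting of all (R1, R2, R3, R4) with Ri ≥ 0 such that (R1, R2) ∈ 𝒞(P1, P2; 1), (R3, R4) ∈ 𝒞(P1, P2; 1), (R1, R2, R3) ∈ 𝒞(P1, P2, h1^2·P1; 1), (R1, R2, R4) ∈ 𝒞(P1, P2, h2^2·P2; 1), (R1, R3, R4) ∈ 𝒞(h1^2·P1, P1, P2; 1), and (R2, R3, R4) ∈ 𝒞(h2^2·P2, P1, P2; 1). Then 𝒪 equals the region {(R1, R2, R3, R4) ∈ ℝ^4 : Ri ≥ 0, (R1, R2, R3) ∈ 𝒞(P1, P2, h1^2·P1; 1), (R1, R3, R4) ∈ 𝒞(h1^2·P1, P1, P2; 1)}; i.e., under mixed strong–extremely strong interference MSES(1,2), all the remaining constraints of the outer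 bound are implied by the two three-user MAC constraints involving the strong-interference link. -/
noncomputable def Lfun (u : ℝ) : ℝ := (1 / 2) * Real.log (1 + u)

lemma Lfun_mono {u v : ℝ} (hu : 0 ≤ u) (huv : u ≤ v) : Lfun u ≤ Lfun v := by
  unfold Lfun
  have := Real.log_le_log (by linarith : (0:ℝ) < 1 + u) (by linarith : 1 + u ≤ 1 + v)
  linarith

lemma Lfun_add {x y u v w : ℝ} (hu : 0 ≤ u) (hv : 0 ≤ v)
    (hx : x ≤ Lfun u) (hy : y ≤ Lfun v) (h : (1 + u) * (1 + v) ≤ 1 + w) :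
    x + y ≤ Lfun w := by
  have h1 : (0:ℝ) < 1 + u := by linarith
  have h2 : (0:ℝ) < 1 + v := by linarith
  have hlog : Real.log (1 + u) + Real.log (1 + v) ≤ Real.log (1 + w) := by
    rw [← Real.log_mul (ne_of_gt h1) (ne_of_gt h2)]
    exact Real.log_le_log (by positivity) h
  unfold Lfun at *
  linarith

lemma mem2 (a b qa qb : ℝ) (h0 : 0 ≤ a) (h1 : 0 ≤ b)
    (c0 : a ≤ Lfun qa) (c1 : b ≤ Lfun qb) (c01 : a + b ≤ Lfun (qa + qb)) :
    ![a, b] ∈ macRegion ![qa, qb] 1 := by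
  refine ⟨fun i => by fin_cases i <;> assumption, ?_⟩
  intro T hT
  fin_cases T
  · exact absurd hT (by simp)
  all_goals simp_all [Lfun, Finset.sum_insert, Finset.sum_singleton]
  all_goals linarith

lemma mem3 (a b c qa qb qc : ℝ) (h0 : 0 ≤ a) (h1 : 0 ≤ b) (h2 : 0 ≤ c)
    (c0 : a ≤ Lfun qa) (c1 : b ≤ Lfun qb) (c2 : c ≤ Lfun qc)
    (c01 : a + b ≤ Lfun (qa + qb)) (c02 : a + c ≤ Lfun (qa + qc))
    (c12 : b + c ≤ Lfun (qb + qc)) (c012 : a + b + c ≤ Lfun (qa + qb + qc)) :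
    ![a, b, c] ∈ macRegion ![qa, qb, qc] 1 := by
  refine ⟨fun i => by fin_cases i <;> assumption, ?_⟩
  intro T hT
  fin_cases T
  · exact absurd hT (by simp)
  all_goals simp_all [Lfun, Finset.sum_insert, Finset.sum_singleton]
  all_goals (ring_nf at *; linarith)

/-- under mixed strong--extremely strong interference MSES(1,2),
the outer-bound region equals the region cut out by the two three-user MAC
constraints involving the strong-interference link. -/
theorem stmt_3 (P1 P2 h1 h2 : ℝ) (hP1 : 0 ≤ P1) (hP2 : 0 ≤ P2)
    (hh1 : 1 ≤ h1 ^ 2) (hh2 : 1 + P1 + P2 + h1 ^ 2 * P1 ≤ h2 ^ 2) :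
    {R : Fin 4 → ℝ | (∀ i, 0 ≤ R i) ∧
      ![R 0, R 1] ∈ macRegion ![P1, P2] 1 ∧
      ![R 2, R 3] ∈ macRegion ![P1, P2] 1 ∧
      ![R 0, R 1, R 2] ∈ macRegion ![P1, P2, h1 ^ 2 * P1] 1 ∧
      ![R 0, R 1, R 3] ∈ macRegion ![P1, P2, h2 ^ 2 * P2] 1 ∧
      ![R 0, R 2, R 3] ∈ macRegion ![h1 ^ 2 * P1, P1, P2] 1 ∧
      ![R 1, R 2, R 3] ∈ macRegion ![h2 ^ 2 * P2, P1, P2] 1} =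
    {R : Fin 4 → ℝ | (∀ i, 0 ≤ R i) ∧
      ![R 0, R 1, R 2] ∈ macRegion ![P1, P2, h1 ^ 2 * P1] 1 ∧
      ![R 0, R 2, R 3] ∈ macRegion ![h1 ^ 2 * P1, P1, P2] 1} := by
  ext R
  simp only [Set.mem_setOf_eq]
  constructor
  · rintro ⟨h0, _, _, hA, _, hB, _⟩
    exact ⟨h0, hA, hB⟩
  · rintro ⟨h0, hA, hB⟩
    have hQ1 : (0:ℝ) ≤ h1 ^ 2 * P1 := mul_nonneg (by positivity) hP1
    have hQ2 : (0:ℝ) ≤ h2 ^ 2 * P2 := mul_nonneg (by positivity) hP2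
    -- extract constraints from hA
    have a0 : R 0 ≤ Lfun P1 := by
      simpa [Lfun] using hA.2 {0} (by simp)
    have a1 : R 1 ≤ Lfun P2 := by
      simpa [Lfun] using hA.2 {1} (by simp)
    have a01 : R 0 + R 1 ≤ Lfun (P1 + P2) := by
      simpa [Lfun, Finset.sum_insert, Finset.sum_singleton] using
        hA.2 {0, 1} (by simp)
    -- extract constraints from hB
    have b1 : R 2 ≤ Lfun P1 := by
      simpa [Lfun] using hB.2 {1} (by simp)
    have b2 : R 3 ≤ Lfun P2 := by
      simpa [Lfun] using hB.2 {2} (by simp)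
    have b12 : R 2 + R 3 ≤ Lfun (P1 + P2) := by
      simpa [Lfun, Finset.sum_insert, Finset.sum_singleton] using
        hB.2 {1, 2} (by simp)
    -- key arithmetic fact
    have hk : 1 + P1 + P2 ≤ h2 ^ 2 := by linarith
    have g : (1 + P1 + P2) * P2 ≤ h2 ^ 2 * P2 := mul_le_mul_of_nonneg_right hk hP2
    have fP2 : P2 ≤ h2 ^ 2 * P2 := by nlinarith [mul_nonneg hP1 hP2, mul_nonneg hP2 hP2]
    refine ⟨h0, ?_, ?_, hA, ?_, hB, ?_⟩
    · exact mem2 _ _ _ _ (h0 0) (h0 1) a0 a1 a01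
    · exact mem2 _ _ _ _ (h0 2) (h0 3) b1 b2 b12
    · -- (R0, R1, R3) ∈ C(P1, P2, h2^2 * P2)
      refine mem3 _ _ _ _ _ _ (h0 0) (h0 1) (h0 3) a0 a1
        (b2.trans (Lfun_mono hP2 fP2)) a01 ?_ ?_ ?_
      · exact Lfun_add hP1 hP2 a0 b2 (by nlinarith [mul_nonneg hP1 hP2])
      · exact Lfun_add hP2 hP2 a1 b2 (by nlinarith [mul_nonneg hP1 hP2, mul_nonneg hP2 hP2])
      · exact Lfun_add (by linarith : (0:ℝ) ≤ P1 + P2) hP2 a01 b2 (by nlinarith)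
    · -- (R1, R2, R3) ∈ C(h2^2 * P2, P1, P2)
      refine mem3 _ _ _ _ _ _ (h0 1) (h0 2) (h0 3)
        (a1.trans (Lfun_mono hP2 fP2)) b1 b2 ?_ ?_ b12 ?_
      · exact Lfun_add hP2 hP1 a1 b1 (by nlinarith [mul_nonneg hP1 hP2])
      · exact Lfun_add hP2 hP2 a1 b2 (by nlinarith [mul_nonneg hP1 hP2, mul_nonneg hP2 hP2])
      · have h := Lfun_add (w := h2 ^ 2 * P2 + P1 + P2) hP2
          (by linarith : (0:ℝ) ≤ P1 + P2) a1 b12 (by nlinarith)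
        linarith
end

section
/- Let n ≥ 1, N > 0, and q1, …, qn ≥ 0. Define the successive-decoding rate point R by Rk = (1/2)·log(1 + qk/(N + ∑_{j<k} qj)) for k = 1, …, n. Then (R1, …, Rn) belongs to the Gaussian MAC region 𝒞(q1, …, qn; N), and R1 + ⋯ + Rn = (1/2)·log(1 + (q1 + ⋯ + qn)/N). -/
/-- the successive-decoding rate point
`R k = (1/2) log (1 + q k / (N + ∑_{j < k} q j))` lies in the Gaussian MAC region, and
its sum rate equals `(1/2) log (1 + (∑ i, q i) / N)`. -/
theorem stmt_9 (n : ℕ) (hn : 1 ≤ n) (N : ℝ) (hN : 0 < N) (q : Fin n → ℝ)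
    (hq : ∀ i, 0 ≤ q i) :
    (fun k : Fin n => (1 / 2) * Real.log (1 + q k / (N + ∑ j ∈ Finset.Iio k, q j))) ∈
      macRegion q N ∧
    ∑ k : Fin n, (1 / 2) * Real.log (1 + q k / (N + ∑ j ∈ Finset.Iio k, q j)) =
      (1 / 2) * Real.log (1 + (∑ i : Fin n, q i) / N) := by
  have hSnn : ∀ k : Fin n, 0 ≤ ∑ j ∈ Finset.Iio k, q j :=
    fun k => Finset.sum_nonneg fun j _ => hq j
  have hden : ∀ k : Fin n, 0 < N + ∑ j ∈ Finset.Iio k, q j := fun k => by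
    have := hSnn k; linarith
  have key : ∀ T : Finset (Fin n),
      ∑ i ∈ T, (1 / 2) * Real.log (1 + q i / (N + ∑ j ∈ Finset.Iio i, q j)) ≤
        (1 / 2) * Real.log (1 + (∑ i ∈ T, q i) / N) := by
    intro T
    induction T using Finset.induction_on_max with
    | empty => simp
    | insert a s ha ih =>
      have hmem : a ∉ s := fun h => lt_irrefl a (ha a h)
      have hQs : 0 ≤ ∑ i ∈ s, q i := Finset.sum_nonneg fun i _ => hq i
      have hsub : ∑ i ∈ s, q i ≤ ∑ j ∈ Finset.Iio a, q j := by
        apply Finset.sum_le_sum_of_subset_of_nonneg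
        · intro b hb; exact Finset.mem_Iio.mpr (ha b hb)
        · intro j _ _; exact hq j
      rw [Finset.sum_insert hmem, Finset.sum_insert hmem]
      have hA : (0:ℝ) < 1 + q a / (N + ∑ i ∈ s, q i) := by
        have : 0 ≤ q a / (N + ∑ i ∈ s, q i) := div_nonneg (hq a) (by linarith)
        linarith
      have hB : (0:ℝ) < 1 + (∑ i ∈ s, q i) / N := by
        have : 0 ≤ (∑ i ∈ s, q i) / N := div_nonneg hQs hN.le
        linarith
      have hdiv : q a / (N + ∑ j ∈ Finset.Iio a, q j) ≤ q a / (N + ∑ i ∈ s, q i) := by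
        apply div_le_div_of_nonneg_left (hq a) (by linarith) (by linarith)
      have h1 : (1 / 2 : ℝ) * Real.log (1 + q a / (N + ∑ j ∈ Finset.Iio a, q j)) ≤
          (1 / 2) * Real.log (1 + q a / (N + ∑ i ∈ s, q i)) := by
        have hx : (0:ℝ) < 1 + q a / (N + ∑ j ∈ Finset.Iio a, q j) := by
          have : 0 ≤ q a / (N + ∑ j ∈ Finset.Iio a, q j) :=
            div_nonneg (hq a) (hden a).le
          linarith
        have hle : 1 + q a / (N + ∑ j ∈ Finset.Iio a, q j) ≤
            1 + q a / (N + ∑ i ∈ s, q i) := by linarith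
        have := Real.log_le_log hx hle
        linarith
      calc (1 / 2 : ℝ) * Real.log (1 + q a / (N + ∑ j ∈ Finset.Iio a, q j)) +
            ∑ i ∈ s, (1 / 2) * Real.log (1 + q i / (N + ∑ j ∈ Finset.Iio i, q j))
          ≤ (1 / 2) * Real.log (1 + q a / (N + ∑ i ∈ s, q i)) +
            (1 / 2) * Real.log (1 + (∑ i ∈ s, q i) / N) := add_le_add h1 ih
        _ = (1 / 2) * Real.log ((1 + q a / (N + ∑ i ∈ s, q i)) *
              (1 + (∑ i ∈ s, q i) / N)) := by
            rw [Real.log_mul (ne_of_gt hA) (ne_of_gt hB)]; ring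
        _ = (1 / 2) * Real.log (1 + (q a + ∑ i ∈ s, q i) / N) := by
            congr 1
            have h2 : N + ∑ i ∈ s, q i ≠ 0 := by linarith
            field_simp
            ring
  constructor
  · refine ⟨fun k => ?_, fun T _ => key T⟩
    have h1 : (1:ℝ) ≤ 1 + q k / (N + ∑ j ∈ Finset.Iio k, q j) := by
      have : 0 ≤ q k / (N + ∑ j ∈ Finset.Iio k, q j) :=
        div_nonneg (hq k) (hden k).le
      linarith
    have := Real.log_nonneg h1
    positivity
  · set q' : ℕ → ℝ := fun j => if h : j < n then q ⟨j, h⟩ else 0 with hq'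
    have hq'nn : ∀ j, 0 ≤ q' j := by
      intro j; simp only [hq']; split
      · exact hq _
      · exact le_refl 0
    have hIio : ∀ k : Fin n, ∑ j ∈ Finset.Iio k, q j = ∑ j ∈ Finset.range k, q' j := by
      intro k
      rw [← Nat.Iio_eq_range, ← Fin.map_valEmbedding_Iio, Finset.sum_map]
      refine Finset.sum_congr rfl fun j _ => ?_
      simp [hq', j.isLt]
    have hQnn : ∀ m : ℕ, 0 ≤ ∑ j ∈ Finset.range m, q' j :=
      fun m => Finset.sum_nonneg fun j _ => hq'nn j
    have hQpos : ∀ m : ℕ, 0 < N + ∑ j ∈ Finset.range m, q' j := fun m => by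
      have := hQnn m; linarith
    set g : ℕ → ℝ := fun m => (1 / 2) * Real.log (N + ∑ j ∈ Finset.range m, q' j) with hg
    have hterm : ∀ k : Fin n,
        (1 / 2 : ℝ) * Real.log (1 + q k / (N + ∑ j ∈ Finset.Iio k, q j)) =
          g ((k : ℕ) + 1) - g (k : ℕ) := by
      intro k
      have hqk : q' (k : ℕ) = q k := by
        simp only [hq']; rw [dif_pos k.isLt]
      have h1 : (1:ℝ) + q k / (N + ∑ j ∈ Finset.Iio k, q j) =
          (N + ∑ j ∈ Finset.range ((k : ℕ) + 1), q' j) /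
            (N + ∑ j ∈ Finset.range (k : ℕ), q' j) := by
        rw [Finset.sum_range_succ, hqk, hIio k]
        have h2 : N + ∑ j ∈ Finset.range (k : ℕ), q' j ≠ 0 := ne_of_gt (hQpos _)
        field_simp
        ring
      rw [h1, Real.log_div (ne_of_gt (hQpos _)) (ne_of_gt (hQpos _))]
      simp only [hg]; ring
    have hsum : ∑ j ∈ Finset.range n, q' j = ∑ i : Fin n, q i := by
      rw [← Fin.sum_univ_eq_sum_range q' n]
      refine Finset.sum_congr rfl fun k _ => ?_
      simp only [hq']; rw [dif_pos k.isLt]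
    calc ∑ k : Fin n, (1 / 2 : ℝ) * Real.log (1 + q k / (N + ∑ j ∈ Finset.Iio k, q j))
        = ∑ k : Fin n, (g ((k : ℕ) + 1) - g (k : ℕ)) :=
          Finset.sum_congr rfl fun k _ => hterm k
      _ = ∑ k ∈ Finset.range n, (g (k + 1) - g k) :=
          Fin.sum_univ_eq_sum_range (fun k => g (k + 1) - g k) n
      _ = g n - g 0 := Finset.sum_range_sub g n
      _ = (1 / 2) * Real.log (1 + (∑ i : Fin n, q i) / N) := by
          simp only [hg, Finset.range_zero, Finset.sum_empty, add_zero, hsum]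
          have h3 : (1:ℝ) + (∑ i : Fin n, q i) / N =
              (N + ∑ i : Fin n, q i) / N := by field_simp
          rw [h3, Real.log_div (ne_of_gt (by
            have : 0 ≤ ∑ i : Fin n, q i := Finset.sum_nonneg fun i _ => hq i
            linarith)) (ne_of_gt hN)]
          ring
end

section
/- Let P1, P2 ≥ 0 and h1, h2 ∈ ℝ. Set INR = h1^2·P1 + h2^2·P2. Then for every ρ ∈ [−1, 1] and every η ∈ ℝ with 0 < η^2 ≤ 1 − ρ^2, setting A = P1·(η − ρ·h1)^2 + P2·(η − ρ·h2)^2 + P1·P2·(h1 − h2)^2, the genie-aided upper bound expression dominates the treating-interference-as-noise lower bound: log(1 + (P1 + P2)/(1 + INR)) ≤ log(1 + (1/η^2)·(INR + A/(1 − ρ^2 + INR))). Consequently the sum-capacity upper bound C̄_Σ = min over such (ρ, η) of the right-hand side is at least the lower bound C̲_Σ = log(1 + (P1 + P2)/(1 + INR)). -/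
lemma key_ineq (P1 P2 h1 h2 ρ η : ℝ) (hP1 : 0 ≤ P1) (hP2 : 0 ≤ P2)
    (hη : 0 < η ^ 2) (hρη : η ^ 2 ≤ 1 - ρ ^ 2) :
    Real.log (1 + (P1 + P2) / (1 + (h1 ^ 2 * P1 + h2 ^ 2 * P2))) ≤
      Real.log (1 + (1 / η ^ 2) * ((h1 ^ 2 * P1 + h2 ^ 2 * P2) +
        (P1 * (η - ρ * h1) ^ 2 + P2 * (η - ρ * h2) ^ 2 + P1 * P2 * (h1 - h2) ^ 2) /
          (1 - ρ ^ 2 + (h1 ^ 2 * P1 + h2 ^ 2 * P2)))) := by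
  have hINR : 0 ≤ h1 ^ 2 * P1 + h2 ^ 2 * P2 := by positivity
  set INR := h1 ^ 2 * P1 + h2 ^ 2 * P2 with hINRdef
  have hs : 0 < 1 - ρ ^ 2 + INR := lt_of_lt_of_le hη (by linarith)
  have hD : 0 < 1 + INR := by linarith
  set A := P1 * (η - ρ * h1) ^ 2 + P2 * (η - ρ * h2) ^ 2 + P1 * P2 * (h1 - h2) ^ 2 with hAdef
  have hA : 0 ≤ A := by positivity
  have heq : (1 / η ^ 2) * (INR + A / (1 - ρ ^ 2 + INR)) =
      ((1 - ρ ^ 2 + INR) * INR + A) / (η ^ 2 * (1 - ρ ^ 2 + INR)) := by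
    field_simp
  have hpoly : (P1 + P2) * (η ^ 2 * (1 - ρ ^ 2 + INR)) ≤
      ((1 - ρ ^ 2 + INR) * INR + A) * (1 + INR) := by
    rw [hAdef, hINRdef]
    nlinarith [mul_nonneg hP1 (sq_nonneg (h1 * (1 + (h1 ^ 2 * P1 + h2 ^ 2 * P2)) - ρ * η)),
      mul_nonneg hP2 (sq_nonneg (h2 * (1 + (h1 ^ 2 * P1 + h2 ^ 2 * P2)) - ρ * η)),
      mul_nonneg (mul_nonneg (mul_nonneg (by linarith : (0:ℝ) ≤ 1 + (h1 ^ 2 * P1 + h2 ^ 2 * P2)) hP1) hP2) (sq_nonneg (h1 - h2))]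
  have hdiv : (P1 + P2) / (1 + INR) ≤
      (1 / η ^ 2) * (INR + A / (1 - ρ ^ 2 + INR)) := by
    rw [heq, div_le_div_iff₀ hD (by positivity)]
    linarith
  have hpos : 0 < 1 + (P1 + P2) / (1 + INR) := by positivity
  exact Real.log_le_log hpos (by linarith)

/-- the genie-aided upper-bound expression dominates the
treating-interference-as-noise lower bound for every admissible `(ρ, η)`, hence the
genie-aided sum-capacity upper bound is at least the lower bound. -/
theorem stmt_13 (P1 P2 h1 h2 : ℝ) (hP1 : 0 ≤ P1) (hP2 : 0 ≤ P2) :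
    (∀ ρ η : ℝ, -1 ≤ ρ → ρ ≤ 1 → 0 < η ^ 2 → η ^ 2 ≤ 1 - ρ ^ 2 →
      Real.log (1 + (P1 + P2) / (1 + (h1 ^ 2 * P1 + h2 ^ 2 * P2))) ≤
      Real.log (1 + (1 / η ^ 2) * ((h1 ^ 2 * P1 + h2 ^ 2 * P2) +
        (P1 * (η - ρ * h1) ^ 2 + P2 * (η - ρ * h2) ^ 2 + P1 * P2 * (h1 - h2) ^ 2) /
          (1 - ρ ^ 2 + (h1 ^ 2 * P1 + h2 ^ 2 * P2))))) ∧
    Real.log (1 + (P1 + P2) / (1 + (h1 ^ 2 * P1 + h2 ^ 2 * P2))) ≤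
      sInf {x : ℝ | ∃ ρ η : ℝ, -1 ≤ ρ ∧ ρ ≤ 1 ∧ 0 < η ^ 2 ∧ η ^ 2 ≤ 1 - ρ ^ 2 ∧
        x = Real.log (1 + (1 / η ^ 2) * ((h1 ^ 2 * P1 + h2 ^ 2 * P2) +
          (P1 * (η - ρ * h1) ^ 2 + P2 * (η - ρ * h2) ^ 2 + P1 * P2 * (h1 - h2) ^ 2) /
            (1 - ρ ^ 2 + (h1 ^ 2 * P1 + h2 ^ 2 * P2))))} := by
  constructor
  · intro ρ η _ _ hη hρη
    exact key_ineq P1 P2 h1 h2 ρ η hP1 hP2 hη hρη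
  · apply le_csInf
    · exact ⟨_, 0, 1, by norm_num, by norm_num, by norm_num, by norm_num, rfl⟩
    · rintro x ⟨ρ, η, _, _, hη, hρη, rfl⟩
      exact key_ineq P1 P2 h1 h2 ρ η hP1 hP2 hη hρη
end
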